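/- Second-order condition for a symmetric interior equilibrium (Proposition 3.5, SOC): Let t₀ ∈ ℝ and let B, V, θ : ℝ → ℝ be twice continuously differentiable on a neighborhood of t₀ with B > 0 and V > 0 on that neighborhood and θ(t₀) = 0. Define ρ(t) = √(B(t)·B(t₀))·cos(θ(t)), w(t) = (V(t₀) + B(t₀) − ρ(t)) / (V(t) + B(t) + V(t₀) + B(t₀) − 2ρ(t)), and Π(t) = (V(t₀) + B(t₀)) − (1 − w(t))²·(V(t₀) + B(t₀)) − w(t)²·(V(t) + B(t)) − 2·w(t)·(1 − w(t))·ρ(t) − c, where c ∈ ℝ. If t₀ is a local maximum of Π, then −(1/4)·V″(t₀) − (1/2)·B″(t₀) + B′(t₀)²·(1/(8·B(t₀)) + 1/(4·V(t₀))) + (B(t₀)/2)·θ′(t₀)² ≤ 0. -/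

import Mathlib

open Filter Real Set

/-- Second derivative test for a local maximum. -/
lemma second_deriv_test_max' {f F : ℝ → ℝ} {a d : ℝ}
    (h1 : ∀ᶠ x in nhds a, HasDerivAt f (F x) x)
    (h2 : HasDerivAt F d a)
    (hmax : IsLocalMax f a) : d ≤ 0 := by
  by_contra hd
  push_neg at hd
  have hFa : F a = 0 := hmax.hasDerivAt_eq_zero h1.self_of_nhds
  have hslope := hasDerivAt_iff_tendsto_slope.1 h2
  have hev : ∀ᶠ x in nhdsWithin a (Set.Ioi a), 0 < F x := by
    have h3 : ∀ᶠ x in nhdsWithin a {a}ᶜ, 0 < slope F a x :=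
      hslope.eventually (eventually_gt_nhds hd)
    have hmono : nhdsWithin a (Set.Ioi a) ≤ nhdsWithin a {a}ᶜ :=
      nhdsWithin_mono a (fun x hx => ne_of_gt hx)
    filter_upwards [h3.filter_mono hmono, self_mem_nhdsWithin] with x hx hxa
    have hs : slope F a x = F x / (x - a) := by simp [slope_def_field, hFa]
    rw [hs] at hx
    have hxa' : 0 < x - a := sub_pos.2 hxa
    have h5 := mul_pos hx hxa'
    calc (0:ℝ) < F x / (x - a) * (x - a) := h5
      _ = F x := by field_simp
  have hE : {x | 0 < F x ∧ f x ≤ f a ∧ HasDerivAt f (F x) x} ∈ nhdsWithin a (Set.Ioi a) := by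
    have h4 : ∀ᶠ x in nhdsWithin a (Set.Ioi a), f x ≤ f a := hmax.filter_mono nhdsWithin_le_nhds
    have h5 : ∀ᶠ x in nhdsWithin a (Set.Ioi a), HasDerivAt f (F x) x :=
      h1.filter_mono nhdsWithin_le_nhds
    filter_upwards [hev, h4, h5] with x hx1 hx2 hx3
    exact ⟨hx1, hx2, hx3⟩
  obtain ⟨u, hau, hsub⟩ := mem_nhdsGT_iff_exists_Ioc_subset.1 hE
  have hau' : a < u := hau
  have hmono : StrictMonoOn f (Set.Icc a u) := by
    apply strictMonoOn_of_deriv_pos (convex_Icc a u)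
    · intro x hx
      rcases eq_or_lt_of_le hx.1 with h | h
      · exact (h ▸ h1.self_of_nhds.continuousAt).continuousWithinAt
      · exact ((hsub ⟨h, hx.2⟩).2.2.continuousAt).continuousWithinAt
    · intro x hx
      rw [interior_Icc] at hx
      have hx' : x ∈ Set.Ioc a u := ⟨hx.1, hx.2.le⟩
      rw [(hsub hx').2.2.deriv]
      exact (hsub hx').1
  have hlt : f a < f u := hmono ⟨le_rfl, hau'.le⟩ ⟨hau'.le, le_rfl⟩ hau'
  exact absurd (hsub ⟨hau', le_rfl⟩).2.1 (not_le.2 hlt)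

/-- From C² on a neighborhood, get eventual differentiability plus second derivative. -/
lemma c2_pack {f : ℝ → ℝ} {t₀ : ℝ} {s : Set ℝ} (hs : s ∈ nhds t₀) (hf : ContDiffOn ℝ 2 f s) :
    (∀ᶠ t in nhds t₀, HasDerivAt f (deriv f t) t) ∧
      HasDerivAt (deriv f) (deriv (deriv f) t₀) t₀ := by
  obtain ⟨u, hu, hfu⟩ := (hf.contDiffAt hs).contDiffOn le_rfl (by simp)
  have hio : IsOpen (interior u) := isOpen_interior
  have ht₀ : t₀ ∈ interior u := mem_interior_iff_mem_nhds.2 hu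
  have hfu' : ContDiffOn ℝ 2 f (interior u) := hfu.mono interior_subset
  constructor
  · filter_upwards [hio.mem_nhds ht₀] with t ht
    exact ((hfu'.differentiableOn (by norm_num)).differentiableAt (hio.mem_nhds ht)).hasDerivAt
  · have h1 : ContDiffOn ℝ 1 (deriv f) (interior u) := hfu'.deriv_of_isOpen hio (by norm_num)
    exact ((h1.differentiableOn (by norm_num)).differentiableAt (hio.mem_nhds ht₀)).hasDerivAt



/-- **Second-order condition for a symmetric interior equilibrium** (Proposition 3.5, SOC):
with `B, V, θ` twice continuously differentiable on a neighborhood of `t₀`, positive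
`B, V` on that neighborhood and `θ t₀ = 0`, define `ρ t = √(B t · B t₀) · cos (θ t)`,
the optimal weight `w t = (V t₀ + B t₀ − ρ t)/(V t + B t + V t₀ + B t₀ − 2 ρ t)`, and
firm 1's profit
`Π t = (V t₀ + B t₀) − (1 − w t)²(V t₀ + B t₀) − (w t)²(V t + B t) − 2 w t (1 − w t) ρ t − c`.
If `t₀` is a local maximum of `Π`, then
`−(1/4)V″(t₀) − (1/2)B″(t₀) + B′(t₀)²(1/(8B(t₀)) + 1/(4V(t₀))) + (B(t₀)/2)θ′(t₀)² ≤ 0`. -/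
theorem symmetric_equilibrium_soc
    (t₀ c : ℝ) (B V θ : ℝ → ℝ) (s : Set ℝ) (hs : s ∈ nhds t₀)
    (hB : ContDiffOn ℝ 2 B s) (hV : ContDiffOn ℝ 2 V s) (hθ : ContDiffOn ℝ 2 θ s)
    (hBpos : ∀ t ∈ s, 0 < B t) (hVpos : ∀ t ∈ s, 0 < V t)
    (hθ₀ : θ t₀ = 0)
    (ρ w profit : ℝ → ℝ)
    (hρ : ∀ t, ρ t = Real.sqrt (B t * B t₀) * Real.cos (θ t))
    (hw : ∀ t, w t = (V t₀ + B t₀ - ρ t) / (V t + B t + V t₀ + B t₀ - 2 * ρ t))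
    (hprofit : ∀ t, profit t
      = (V t₀ + B t₀) - (1 - w t) ^ 2 * (V t₀ + B t₀) - (w t) ^ 2 * (V t + B t)
        - 2 * w t * (1 - w t) * ρ t - c)
    (hmax : IsLocalMax profit t₀) :
    -(1 / 4) * deriv (deriv V) t₀ - (1 / 2) * deriv (deriv B) t₀
      + (deriv B t₀) ^ 2 * (1 / (8 * B t₀) + 1 / (4 * V t₀))
      + (B t₀ / 2) * (deriv θ t₀) ^ 2 ≤ 0 := by
  have hmem : t₀ ∈ s := mem_of_mem_nhds hs
  have hb : 0 < B t₀ := hBpos t₀ hmem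
  have hv : 0 < V t₀ := hVpos t₀ hmem
  obtain ⟨hBd, hB2'⟩ := c2_pack hs hB
  obtain ⟨hVd, hV2'⟩ := c2_pack hs hV
  obtain ⟨hθd, hθ2'⟩ := c2_pack hs hθ
  set b := B t₀ with hbd
  set v := V t₀ with hvd
  have hρfun : ρ = fun t => Real.sqrt (B t * b) * Real.cos (θ t) := funext hρ
  set P : ℝ → ℝ := fun t => Real.sqrt (B t * b) with hPd
  set R : ℝ → ℝ := fun t =>
      deriv B t * b / (2 * P t) * Real.cos (θ t) + P t * (-Real.sin (θ t) * deriv θ t) with hRd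
  set Dn : ℝ → ℝ := fun t => V t + B t + v + b - 2 * ρ t with hDnd
  set Nn : ℝ → ℝ := fun t => (v + b - ρ t) ^ 2 with hNnd
  set Np : ℝ → ℝ := fun t => -(2 * (v + b - ρ t) * R t) with hNpd
  set Dp : ℝ → ℝ := fun t => deriv V t + deriv B t - 2 * R t with hDpd
  set F : ℝ → ℝ := fun t => (Np t * Dn t - Nn t * Dp t) / Dn t ^ 2 with hFd
  set g : ℝ → ℝ := fun t => Nn t / Dn t with hgd
  -- values at t₀
  have hP0 : P t₀ = b := by rw [hPd]; exact Real.sqrt_mul_self hb.le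
  have hρ0 : ρ t₀ = b := by
    rw [hρ t₀, hθ₀]; simp [Real.sqrt_mul_self hb.le]
    exact Real.sqrt_mul_self hb.le
  have hR0 : R t₀ = deriv B t₀ / 2 := by
    rw [hRd]; simp only [hP0, hθ₀, Real.cos_zero, Real.sin_zero]
    field_simp
    ring
  have hD0 : Dn t₀ = 2 * v := by rw [hDnd]; simp only [hρ0]; ring
  have hN0 : Nn t₀ = v ^ 2 := by rw [hNnd]; simp only [hρ0]; ring
  have hNp0 : Np t₀ = -(v * deriv B t₀) := by rw [hNpd]; simp only [hρ0, hR0]; ring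
  have hDp0 : Dp t₀ = deriv V t₀ := by rw [hDpd]; simp only [hR0]; ring
  -- positivity eventually
  have hBpos' : ∀ᶠ t in nhds t₀, 0 < B t := by
    filter_upwards [hs] with t ht using hBpos t ht
  have hDcont : ContinuousAt Dn t₀ := by
    rw [hDnd, hρfun]
    have hBc := hBd.self_of_nhds.continuousAt
    have hVc := hVd.self_of_nhds.continuousAt
    have hθc := hθd.self_of_nhds.continuousAt
    have hρc : ContinuousAt (fun t => Real.sqrt (B t * b) * Real.cos (θ t)) t₀ :=
      ((Real.continuous_sqrt.continuousAt).comp (hBc.mul continuousAt_const)).mul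
        ((Real.continuous_cos.continuousAt).comp hθc)
    exact (((hVc.add hBc).add continuousAt_const).add continuousAt_const).sub
      (continuousAt_const.mul hρc)
  have hDpos : ∀ᶠ t in nhds t₀, 0 < Dn t :=
    hDcont.eventually (eventually_gt_nhds (by rw [hD0]; positivity))
  -- eventual derivatives
  have hρev : ∀ᶠ t in nhds t₀, HasDerivAt ρ (R t) t := by
    filter_upwards [hBd, hθd, hBpos'] with t hBt hθt hBpt
    rw [hρfun, hRd]
    simp only [hPd]
    exact ((hBt.mul_const b).sqrt (by positivity)).mul hθt.cos
  have hNev : ∀ᶠ t in nhds t₀, HasDerivAt Nn (Np t) t := by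
    filter_upwards [hρev] with t hρt
    have h := ((hasDerivAt_const t (v + b)).sub hρt).pow 2
    have hval : Np t = ↑2 * (v + b - ρ t) ^ (2 - 1) * (0 - R t) := by
      rw [hNpd]; push_cast; ring
    rw [hNnd, hval]
    exact h
  have hDev : ∀ᶠ t in nhds t₀, HasDerivAt Dn (Dp t) t := by
    filter_upwards [hρev, hBd, hVd] with t hρt hBt hVt
    rw [hDnd, hDpd]
    exact (((hVt.add hBt).add_const v).add_const b).sub (hρt.const_mul 2)
  have hgev : ∀ᶠ t in nhds t₀, HasDerivAt g (F t) t := by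
    filter_upwards [hNev, hDev, hDpos] with t hNt hDt hDpt
    rw [hgd, hFd]
    exact hNt.div hDt (ne_of_gt hDpt)
  -- local max transfer
  have hpe : ∀ᶠ t in nhds t₀, profit t = g t - c := by
    filter_upwards [hDpos] with t hDt
    have hne : V t + B t + v + b - 2 * ρ t ≠ 0 := by
      rw [hDnd] at hDt; exact ne_of_gt hDt
    rw [hprofit t, hw t, hgd, hNnd, hDnd]
    beta_reduce
    have hx := div_mul_cancel₀ (v + b - ρ t) hne
    linear_combination (-(v + b - ρ t) / (V t + B t + v + b - 2 * ρ t)) * hx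
  have hgmax : IsLocalMax g t₀ := by
    have h0 : profit t₀ = g t₀ - c := hpe.self_of_nhds
    have : ∀ᶠ t in nhds t₀, g t ≤ g t₀ := by
      filter_upwards [hpe, hmax] with t h1 h2
      linarith
    exact this
  -- first order condition
  have hF0 : F t₀ = 0 := hgmax.hasDerivAt_eq_zero hgev.self_of_nhds
  have hFOC : deriv V t₀ = -(2 * deriv B t₀) := by
    simp only [hFd] at hF0
    rw [hNp0, hD0, hN0, hDp0] at hF0
    field_simp at hF0
    have h2 : v ^ 2 * (deriv V t₀ + 2 * deriv B t₀) = 0 := by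
      rw [show deriv V t₀ + 2 * deriv B t₀ = 0 by linarith [hF0], mul_zero]
    rcases mul_eq_zero.1 h2 with h | h
    · exact absurd h (pow_ne_zero 2 hv.ne')
    · linarith
  -- second derivatives at t₀
  have hρt0 : HasDerivAt ρ (R t₀) t₀ := hρev.self_of_nhds
  have hNt0 : HasDerivAt Nn (Np t₀) t₀ := hNev.self_of_nhds
  have hDt0 : HasDerivAt Dn (Dp t₀) t₀ := hDev.self_of_nhds
  have hPt0 : HasDerivAt P (deriv B t₀ / 2) t₀ := by
    rw [hPd]
    have h := (hBd.self_of_nhds.mul_const b).sqrt (by positivity : B t₀ * b ≠ 0)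
    have : deriv B t₀ * b / (2 * Real.sqrt (B t₀ * b)) = deriv B t₀ / 2 := by
      rw [← hbd, Real.sqrt_mul_self hb.le]
      field_simp
    rwa [this] at h
  have hcos0 : HasDerivAt (fun t => Real.cos (θ t)) 0 t₀ := by
    have h := hθd.self_of_nhds.cos
    rw [hθ₀] at h
    simpa using h
  have hsin0 : HasDerivAt (fun t => Real.sin (θ t)) (deriv θ t₀) t₀ := by
    have h := hθd.self_of_nhds.sin
    rw [hθ₀] at h
    simpa using h
  have hRt0 : HasDerivAt R
      (deriv (deriv B) t₀ / 2 - deriv B t₀ ^ 2 / (4 * b) - b * deriv θ t₀ ^ 2) t₀ := by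
    rw [hRd]
    have h1 := ((hB2'.mul_const b).div (hPt0.const_mul 2)
      (by rw [hP0]; positivity)).mul hcos0
    have h2 := hPt0.mul ((hsin0.neg).mul hθ2')
    have h := h1.add h2
    refine h.congr_deriv ?_
    simp only [Pi.mul_apply, Pi.neg_apply]
    rw [hP0, hθ₀]
    simp only [Real.cos_zero, Real.sin_zero]
    field_simp
    ring_nf
  have hNp2 : HasDerivAt Np
      (-(2 * (0 - R t₀) * R t₀ + 2 * (v + b - ρ t₀) *
        (deriv (deriv B) t₀ / 2 - deriv B t₀ ^ 2 / (4 * b) - b * deriv θ t₀ ^ 2))) t₀ := by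
    rw [hNpd]
    exact ((((hasDerivAt_const t₀ (v + b)).sub hρt0).const_mul 2).mul hRt0).neg
  have hDp2 : HasDerivAt Dp
      (deriv (deriv V) t₀ + deriv (deriv B) t₀ -
        2 * (deriv (deriv B) t₀ / 2 - deriv B t₀ ^ 2 / (4 * b) - b * deriv θ t₀ ^ 2)) t₀ := by
    rw [hDpd]
    exact (hV2'.add hB2').sub (hRt0.const_mul 2)
  have hDnne : Dn t₀ ^ 2 ≠ 0 := by rw [hD0]; positivity
  have hF2 := ((hNp2.mul hDt0).sub (hNt0.mul hDp2)).div (hDt0.pow 2) hDnne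
  have hE := second_deriv_test_max' hgev (by rw [hFd]; exact hF2) hgmax
  refine le_trans (le_of_eq ?_) hE
  simp only [Pi.pow_apply, Pi.sub_apply, Pi.mul_apply]
  rw [hρ0, hR0, hN0, hD0, hNp0, hDp0, hFOC]
  push_cast
  field_simp
  ring
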